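/- arXiv:2601.16922 — 5 statements merged into one kernel-verified Lean document; each statement's English description precedes it below -/
import Mathlib

section
/- There exist a family of groups G and a hypothesis class H on the same infinite input domain X, each with VC dimension 1, such that the class of group-realizable concepts C(G,H) has infinite VC dimension. Specifically, if X is infinite, H consists of the two constant functions (constant +1 and constant -1), and G is the family of all singleton subsets of X, then C(G,H) equals the set of all functions X → {-1,+1}, and hence shatters finite subsets of X of every size. -/
/-- The class of group-realizable concepts with respect to a family of groups `G`
and a hypothesis class `H` (labels encoded as `Bool`). -/
def GRConcepts {X : Type*} (G : Set (Set X)) (H : Set (X → Bool)) : Set (X → Bool) :=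
  {c | ∀ g ∈ G, ∃ h ∈ H, ∀ x ∈ g, c x = h x}

/-- A class of Boolean-valued functions shatters a finite set. -/
def Shatters {X : Type*} (F : Set (X → Bool)) (S : Finset X) : Prop :=
  ∀ b : X → Bool, ∃ f ∈ F, ∀ x ∈ S, f x = b x

/-- A family of sets shatters a finite set. -/
def SetShatters {X : Type*} (G : Set (Set X)) (S : Finset X) : Prop :=
  ∀ T ⊆ S, ∃ g ∈ G, ∀ x ∈ S, x ∈ g ↔ x ∈ T

theorem stmt0 (X : Type*) (hX : Infinite X) :
    let H : Set (X → Bool) := {fun _ => true, fun _ => false}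
    let G : Set (Set X) := {s | ∃ x : X, s = {x}}
    -- G has VC dimension 1
    ((∀ S : Finset X, SetShatters G S → S.card ≤ 1) ∧
      ∃ S : Finset X, S.card = 1 ∧ SetShatters G S) ∧
    -- H has VC dimension 1
    ((∀ S : Finset X, Shatters H S → S.card ≤ 1) ∧
      ∃ S : Finset X, S.card = 1 ∧ Shatters H S) ∧
    -- C(G,H) is the set of all functions X → Bool
    GRConcepts G H = Set.univ ∧
    -- hence C(G,H) shatters finite subsets of every size: infinite VC dimension
    (∀ n : ℕ, ∃ S : Finset X, S.card = n ∧ Shatters (GRConcepts G H) S) := by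
  classical
  intro H G
  obtain ⟨x0⟩ := hX.nonempty
  refine ⟨⟨?_, ?_⟩, ⟨?_, ?_⟩, ?_, ?_⟩
  · -- G VC ≤ 1
    intro S hS
    by_contra hcard
    push_neg at hcard
    obtain ⟨x, hx, y, hy, hxy⟩ := Finset.one_lt_card.mp hcard
    obtain ⟨g, ⟨z, hz⟩, hg⟩ := hS S le_rfl
    have hxg : x ∈ g := (hg x hx).mpr hx
    have hyg : y ∈ g := (hg y hy).mpr hy
    rw [hz] at hxg hyg
    simp only [Set.mem_singleton_iff] at hxg hyg
    exact hxy (hxg.trans hyg.symm)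
  · -- G shatters a singleton
    refine ⟨{x0}, Finset.card_singleton x0, ?_⟩
    intro T hT
    by_cases h0 : x0 ∈ T
    · exact ⟨{x0}, ⟨x0, rfl⟩, by simp_all⟩
    · obtain ⟨y, hy⟩ := exists_ne x0
      refine ⟨{y}, ⟨y, rfl⟩, ?_⟩
      intro x hx
      simp only [Finset.mem_singleton] at hx
      subst hx
      simp [Ne.symm hy, h0]
  · -- H VC ≤ 1
    intro S hS
    by_contra hcard
    push_neg at hcard
    obtain ⟨x, hx, y, hy, hxy⟩ := Finset.one_lt_card.mp hcard
    obtain ⟨f, hf, hb⟩ := hS (fun z => decide (z = x))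
    have h1 : f x = true := by simpa using hb x hx
    have h2 : f y = false := by simpa [Ne.symm hxy] using hb y hy
    rcases hf with hf | hf <;> (subst hf; simp_all)
  · -- H shatters a singleton
    refine ⟨{x0}, Finset.card_singleton x0, ?_⟩
    intro b
    by_cases hb : b x0 = true
    · exact ⟨fun _ => true, Or.inl rfl, by simp_all⟩
    · refine ⟨fun _ => false, Or.inr rfl, ?_⟩
      intro x hx
      simp only [Finset.mem_singleton] at hx
      subst hx
      simp [Bool.not_eq_true] at hb
      simp [hb]
  · -- GRConcepts = univ
    ext c
    simp only [Set.mem_univ, iff_true]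
    intro g hg
    obtain ⟨x, rfl⟩ := hg
    by_cases hc : c x = true
    · exact ⟨fun _ => true, Or.inl rfl, by simp_all⟩
    · refine ⟨fun _ => false, Or.inr rfl, ?_⟩
      intro y hy
      simp only [Set.mem_singleton_iff] at hy
      subst hy
      simpa [Bool.not_eq_true] using hc
  · -- infinite VC
    intro n
    obtain ⟨S, -, hS⟩ := Set.Infinite.exists_subset_card_eq (Set.infinite_univ (α := X)) n
    refine ⟨S, hS, ?_⟩
    intro b
    refine ⟨b, ?_, fun x _ => rfl⟩
    intro g hg
    obtain ⟨x, rfl⟩ := hg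
    by_cases hc : b x = true
    · exact ⟨fun _ => true, Or.inl rfl, by simp_all⟩
    · refine ⟨fun _ => false, Or.inr rfl, ?_⟩
      intro y hy
      simp only [Set.mem_singleton_iff] at hy
      subst hy
      simpa [Bool.not_eq_true] using hc
end

section
/- Let F = { x ↦ 1[x ∈ g]·1[c(x) ≠ c*(x)] : g ∈ G, c ∈ C(G,H) } for a fixed c* ∈ C(G,H). Then for any k points x₁,…,x_k ∈ X, the number of distinct vectors (f(x₁),…,f(x_k)) with f ∈ F is at most S_X(G,k) · sup_{g∈G} S_g(H,k), where S_X(G,k) is the k-th shattering coefficient of G (viewed as {0,1}-valued functions) and S_g(H,k) is the k-th shattering coefficient of H restricted to g. In particular, if G has VC dimension d_G and sup_{g∈G} VCdim(H|_g) = d, this is at most (∑_{i=0}^{d_G} (k choose i)) · (∑_{i=0}^{d} (k choose i)). -/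
open scoped Classical

/-- Sauer–Shelah for finite families of boolean patterns on `Fin k`. -/
lemma boolSauer {k m : ℕ} (F : Finset (Fin k → Bool))
    (hF : ∀ S : Finset (Fin k),
      (∀ b : Fin k → Bool, ∃ f ∈ F, ∀ i ∈ S, f i = b i) → S.card ≤ m) :
    F.card ≤ ∑ i ∈ Finset.range (m + 1), k.choose i := by
  classical
  set φ : (Fin k → Bool) → Finset (Fin k) :=
    fun f => Finset.univ.filter (fun i => f i = true) with hφ
  have hinj : Set.InjOn φ ↑F := by
    intro f _ g _ hfg
    funext i
    have hi := Finset.ext_iff.1 hfg i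
    simp only [hφ, Finset.mem_filter, Finset.mem_univ, true_and] at hi
    cases hfi : f i <;> cases hgi : g i <;> simp_all
  set 𝒜 : Finset (Finset (Fin k)) := F.image φ with h𝒜
  have hcard : F.card = 𝒜.card := (Finset.card_image_of_injOn hinj).symm
  rw [hcard]
  have hsh : ∀ s, 𝒜.Shatters s → s.card ≤ m := by
    intro s hs
    apply hF
    intro b
    obtain ⟨u, hu, hsu⟩ := hs (Finset.filter_subset (fun i => b i = true) s)
    obtain ⟨f, hf, rfl⟩ := Finset.mem_image.1 hu
    refine ⟨f, hf, fun i hi => ?_⟩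
    have h1 := Finset.ext_iff.1 hsu i
    simp only [hφ, Finset.mem_inter, Finset.mem_filter, Finset.mem_univ, true_and, hi,
      true_and] at h1
    cases hfi : f i <;> cases hbi : b i <;> simp_all
  have hvc : 𝒜.vcDim ≤ m :=
    Finset.sup_le fun s hs => hsh s (Finset.mem_shatterer.1 hs)
  have hIic : (Finset.Iic m : Finset ℕ) = Finset.range (m + 1) := by
    ext i; simp [Nat.lt_succ_iff]
  calc 𝒜.card ≤ 𝒜.shatterer.card := 𝒜.card_le_card_shatterer
    _ ≤ ∑ i ∈ Finset.Iic 𝒜.vcDim, (Fintype.card (Fin k)).choose i :=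
        Finset.card_shatterer_le_sum_vcDim
    _ ≤ ∑ i ∈ Finset.range (m + 1), k.choose i := by
        simp only [Fintype.card_fin]
        rw [← hIic]
        exact Finset.sum_le_sum_of_subset (Finset.Iic_subset_Iic.2 hvc)

theorem stmt4 {X : Type*} (G : Set (Set X)) (H : Set (X → Bool))
    (cs : X → Bool) (hcs : cs ∈ GRConcepts G H)
    (dG d : ℕ)
    -- G has VC dimension at most dG
    (hdG : ∀ S : Finset X, SetShatters G S → S.card ≤ dG)
    -- for every g ∈ G, H restricted to g has VC dimension at most d
    (hd : ∀ g ∈ G, ∀ S : Finset X, ↑S ⊆ g → Shatters H S → S.card ≤ d)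
    (k : ℕ) (x : Fin k → X) :
    -- the number of behavior patterns of
    -- F = { 1[·∈g]·1[c ≠ c*] : g ∈ G, c ∈ C(G,H) } on x₁,…,x_k is at most the
    -- product of the Sauer bounds for G and for H restricted to groups
    Nat.card {v : Fin k → Bool //
        ∃ g ∈ G, ∃ c ∈ GRConcepts G H,
          v = fun i => decide (x i ∈ g) && decide (c (x i) ≠ cs (x i))} ≤
      (∑ i ∈ Finset.range (dG + 1), k.choose i) *
        (∑ i ∈ Finset.range (d + 1), k.choose i) := by
  classical
  set pat : Set X → (Fin k → Bool) := fun g => fun i => decide (x i ∈ g) with hpat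
  set A : Finset ((Fin k → Bool) × (Fin k → Bool)) :=
    Finset.univ.filter (fun p =>
      ∃ g ∈ G, ∃ h ∈ H, p.1 = pat g ∧ p.2 = fun i => p.1 i && h (x i)) with hA
  set Φ : (Fin k → Bool) × (Fin k → Bool) → (Fin k → Bool) :=
    fun p => fun i => p.1 i && (p.2 i != cs (x i)) with hΦ
  -- Step 1: the pattern set is contained in the image of A under Φ
  have hsub : {v : Fin k → Bool | ∃ g ∈ G, ∃ c ∈ GRConcepts G H,
      v = fun i => decide (x i ∈ g) && decide (c (x i) ≠ cs (x i))}
      ⊆ ↑(A.image Φ) := by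
    rintro v ⟨g, hg, c, hc, rfl⟩
    obtain ⟨h, hH, hagree⟩ := hc g hg
    refine Finset.mem_coe.2 (Finset.mem_image.2
      ⟨(pat g, fun i => pat g i && h (x i)), ?_, ?_⟩)
    · simp only [hA, Finset.mem_filter, Finset.mem_univ, true_and]
      exact ⟨g, hg, h, hH, rfl, rfl⟩
    · funext i
      by_cases hxi : x i ∈ g
      · have hc' : c (x i) = h (x i) := hagree _ hxi
        cases hh : h (x i) <;> cases hcsi : cs (x i) <;>
          simp [hΦ, hpat, hxi, hc', hh, hcsi]
      · simp [hΦ, hpat, hxi]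
  have step1 : Nat.card {v : Fin k → Bool //
      ∃ g ∈ G, ∃ c ∈ GRConcepts G H,
        v = fun i => decide (x i ∈ g) && decide (c (x i) ≠ cs (x i))} ≤ A.card := by
    have h1 : Nat.card {v : Fin k → Bool //
        ∃ g ∈ G, ∃ c ∈ GRConcepts G H,
          v = fun i => decide (x i ∈ g) && decide (c (x i) ≠ cs (x i))}
        = ({v : Fin k → Bool | ∃ g ∈ G, ∃ c ∈ GRConcepts G H,
            v = fun i => decide (x i ∈ g) && decide (c (x i) ≠ cs (x i))}).ncard :=
      Nat.card_coe_set_eq _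
    rw [h1]
    calc _ ≤ (↑(A.image Φ) : Set (Fin k → Bool)).ncard :=
          Set.ncard_le_ncard hsub (Finset.finite_toSet _)
      _ = (A.image Φ).card := Set.ncard_coe_finset _
      _ ≤ A.card := Finset.card_image_le
  refine step1.trans ?_
  -- Step 2: count A fiberwise over the first component
  rw [Finset.card_eq_sum_card_image Prod.fst A]
  -- Bound on the number of first components (patterns of G)
  have hU : (A.image Prod.fst).card ≤ ∑ i ∈ Finset.range (dG + 1), k.choose i := by
    apply boolSauer
    intro S hshat
    -- x is injective on S
    have hinjx : Set.InjOn x ↑S := by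
      intro i hi j hj hij
      by_contra hne
      obtain ⟨f, hfU, hfb⟩ := hshat (fun l => decide (l = i))
      obtain ⟨p, hp, rfl⟩ := Finset.mem_image.1 hfU
      simp only [hA, Finset.mem_filter, Finset.mem_univ, true_and] at hp
      obtain ⟨g, hg, h, hH, hp1, hp2⟩ := hp
      have h1 := hfb i hi
      have h2 := hfb j hj
      rw [hp1] at h1 h2
      simp only [hpat] at h1 h2
      rw [hij] at h1
      rw [h1] at h2
      simp at h2
      exact hne h2.symm
    have hT : SetShatters G (S.image x) := by
      intro T' hT'
      obtain ⟨f, hfU, hfb⟩ := hshat (fun i => decide (x i ∈ T'))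
      obtain ⟨p, hp, rfl⟩ := Finset.mem_image.1 hfU
      simp only [hA, Finset.mem_filter, Finset.mem_univ, true_and] at hp
      obtain ⟨g, hg, h, hH, hp1, hp2⟩ := hp
      refine ⟨g, hg, fun y hy => ?_⟩
      obtain ⟨i, hi, rfl⟩ := Finset.mem_image.1 hy
      have := hfb i hi
      rw [hp1] at this
      simp only [hpat] at this
      constructor
      · intro hmem
        have : decide (x i ∈ g) = decide (x i ∈ T') := this
        simpa [hmem] using this.symm
      · intro hmem
        have : decide (x i ∈ g) = decide (x i ∈ T') := this
        simp [hmem] at this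
        exact this
    have hcardeq : (S.image x).card = S.card := Finset.card_image_of_injOn hinjx
    exact hcardeq ▸ hdG (S.image x) hT
  -- Bound on each fiber (patterns of H restricted to a group)
  have hfiber : ∀ u ∈ A.image Prod.fst,
      (A.filter fun p => p.1 = u).card ≤ ∑ i ∈ Finset.range (d + 1), k.choose i := by
    intro u hu
    obtain ⟨p₀, hp₀, hp₀1⟩ := Finset.mem_image.1 hu
    simp only [hA, Finset.mem_filter, Finset.mem_univ, true_and] at hp₀
    obtain ⟨g₀, hg₀, h₀, hH₀, hpe1, _⟩ := hp₀
    have hu0 : u = pat g₀ := hp₀1 ▸ hpe1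
    -- project the fiber to second components
    have hcardim : (A.filter fun p => p.1 = u).card
        = ((A.filter fun p => p.1 = u).image Prod.snd).card := by
      refine (Finset.card_image_of_injOn ?_).symm
      intro p hp q hq hpq
      simp only [Finset.coe_filter, Set.mem_setOf_eq] at hp hq
      exact Prod.ext (hp.2.trans hq.2.symm) hpq
    rw [hcardim]
    apply boolSauer
    intro S hshat
    -- every element of the fiber image has the masked form
    have hform : ∀ w ∈ (A.filter fun p => p.1 = u).image Prod.snd,
        ∃ h ∈ H, w = fun i => u i && h (x i) := by
      intro w hw
      obtain ⟨p, hp, rfl⟩ := Finset.mem_image.1 hw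
      simp only [Finset.mem_filter] at hp
      obtain ⟨hpA, hp1⟩ := hp
      simp only [hA, Finset.mem_filter, Finset.mem_univ, true_and] at hpA
      obtain ⟨g, hg, h, hH, hq1, hq2⟩ := hpA
      exact ⟨h, hH, by rw [hq2, hp1]⟩
    -- all points of S lie in g₀
    have hSg : ∀ i ∈ S, x i ∈ g₀ := by
      intro i hi
      obtain ⟨w, hw, hwb⟩ := hshat (fun _ => true)
      obtain ⟨h, hH, rfl⟩ := hform w hw
      have := hwb i hi
      simp only [Bool.and_eq_true] at this
      have hui : u i = true := this.1
      rw [hu0] at hui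
      simpa [hpat] using hui
    have hutrue : ∀ i ∈ S, u i = true := by
      intro i hi
      rw [hu0]
      simpa [hpat] using hSg i hi
    -- x is injective on S
    have hinjx : Set.InjOn x ↑S := by
      intro i hi j hj hij
      by_contra hne
      obtain ⟨w, hw, hwb⟩ := hshat (fun l => decide (l = i))
      obtain ⟨h, hH, rfl⟩ := hform w hw
      have h1 := hwb i hi
      have h2 := hwb j hj
      simp only [hutrue i hi, Bool.true_and] at h1
      simp only [hutrue j hj, Bool.true_and] at h2
      rw [hij] at h1
      rw [h1] at h2
      simp at h2
      exact hne h2.symm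
    -- H shatters the image of S, which lies in g₀
    have hTsub : ↑(S.image x) ⊆ g₀ := by
      intro y hy
      obtain ⟨i, hi, rfl⟩ := Finset.mem_image.1 (Finset.mem_coe.1 hy)
      exact hSg i hi
    have hTshat : Shatters H (S.image x) := by
      intro b
      obtain ⟨w, hw, hwb⟩ := hshat (fun i => b (x i))
      obtain ⟨h, hH, rfl⟩ := hform w hw
      refine ⟨h, hH, fun y hy => ?_⟩
      obtain ⟨i, hi, rfl⟩ := Finset.mem_image.1 hy
      have := hwb i hi
      simp only [hutrue i hi, Bool.true_and] at this
      simpa using this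
    have hcardeq : (S.image x).card = S.card := Finset.card_image_of_injOn hinjx
    exact hcardeq ▸ hd g₀ hg₀ (S.image x) hTsub hTshat
  calc ∑ u ∈ A.image Prod.fst, (A.filter fun p => p.1 = u).card
      ≤ ∑ _u ∈ A.image Prod.fst, ∑ i ∈ Finset.range (d + 1), k.choose i :=
        Finset.sum_le_sum hfiber
    _ = (A.image Prod.fst).card * ∑ i ∈ Finset.range (d + 1), k.choose i := by
        rw [Finset.sum_const, smul_eq_mul]
    _ ≤ (∑ i ∈ Finset.range (dG + 1), k.choose i) *
        (∑ i ∈ Finset.range (d + 1), k.choose i) := Nat.mul_le_mul_right _ hU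
end

section
/- In the reduction from ONE-IN-THREE 3SAT: the 3-CNF formula φ with variables x₁,…,x_n and clauses C₁,…,C_m has a truth assignment in which every clause has exactly one true literal if and only if there exists a group-realizable concept c ∈ C(G,H) (for the constructed G and H) that is consistent with the labeled dataset S = ((C₁,+1),…,(C_m,+1)). -/
/-- In the reduction, the group `gᵢ` associated with clause `i`: the three points
for the variables of the clause's literals, together with the clause point. A
literal is encoded as a pair `(variable, polarity)`. -/
def grp {n m : ℕ} (lit : Fin m → Fin 3 → Fin n × Bool) (i : Fin m) :
    Set (Fin n ⊕ Fin m) :=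
  {Sum.inl (lit i 0).1, Sum.inl (lit i 1).1, Sum.inl (lit i 2).1, Sum.inr i}

/-- The hypothesis class `Hᵢᵗ`: hypotheses asserting that literal `t` of clause `i`
is the unique true literal of clause `i`. -/
def Hsub {n m : ℕ} (lit : Fin m → Fin 3 → Fin n × Bool) (i : Fin m) (t : Fin 3) :
    Set ((Fin n ⊕ Fin m) → Bool) :=
  {h | h (Sum.inl (lit i t).1) = (lit i t).2 ∧
       (∀ s : Fin 3, s ≠ t → h (Sum.inl (lit i s).1) = !(lit i s).2) ∧
       h (Sum.inr i) = true ∧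
       ∀ j : Fin m, j ≠ i → h (Sum.inr j) = false}

/-- The group family of the reduction. -/
def GrpFam {n m : ℕ} (lit : Fin m → Fin 3 → Fin n × Bool) : Set (Set (Fin n ⊕ Fin m)) :=
  Set.range (grp lit)

/-- The hypothesis class of the reduction: `H = ⋃ᵢ (Hᵢ¹ ∪ Hᵢ² ∪ Hᵢ³)`. -/
def Hyp {n m : ℕ} (lit : Fin m → Fin 3 → Fin n × Bool) : Set ((Fin n ⊕ Fin m) → Bool) :=
  ⋃ i, ⋃ t, Hsub lit i t

theorem stmt10 (n m : ℕ) (lit : Fin m → Fin 3 → Fin n × Bool)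
    -- each clause's three literals are over three distinct variables
    (hdistinct : ∀ i, Function.Injective fun t => (lit i t).1) :
    -- φ has an assignment making exactly one literal true in each clause iff
    -- some group-realizable concept is consistent with S = ((C₁,+1),…,(C_m,+1))
    (∃ σ : Fin n → Bool, ∀ i : Fin m, ∃! t : Fin 3, σ (lit i t).1 = (lit i t).2) ↔
      (∃ c ∈ GRConcepts (GrpFam lit) (Hyp lit), ∀ i : Fin m, c (Sum.inr i) = true) := by
  constructor
  · rintro ⟨σ, hσ⟩
    refine ⟨Sum.elim σ (fun _ => true), ?_, fun i => rfl⟩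
    rintro g ⟨i, rfl⟩
    obtain ⟨t, ht, huniq⟩ := hσ i
    refine ⟨Sum.elim σ (fun j => decide (j = i)), ?_, ?_⟩
    · refine Set.mem_iUnion.2 ⟨i, Set.mem_iUnion.2 ⟨t, ht, fun s hs => ?_, by simp, fun j hj => by simp [hj]⟩⟩
      have hne : σ (lit i s).1 ≠ (lit i s).2 := fun h => hs (huniq s h)
      cases hb : (lit i s).2 <;> cases hσs : σ (lit i s).1 <;> simp_all
    · intro x hx
      rcases hx with h | h | h | h <;> subst h <;> simp
  · rintro ⟨c, hc, hcons⟩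
    refine ⟨fun x => c (Sum.inl x), fun i => ?_⟩
    obtain ⟨h, hH, hagree⟩ := hc (grp lit i) ⟨i, rfl⟩
    simp only [Hyp, Set.mem_iUnion] at hH
    obtain ⟨j, t, h1, h2, h3, h4⟩ := hH
    have hji : j = i := by
      by_contra hji
      have h5 := h4 i (fun e => hji e.symm)
      have hci := hagree (Sum.inr i) (by simp [grp])
      rw [hcons i, h5] at hci
      exact Bool.true_eq_false.mp hci
    subst hji
    have hmem : ∀ s : Fin 3, Sum.inl (lit j s).1 ∈ grp lit j := by
      intro s; fin_cases s <;> simp [grp]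
    refine ⟨t, ?_, fun s hs => ?_⟩
    · have := hagree _ (hmem t)
      simpa [h1] using this
    · by_contra hst
      change c (Sum.inl (lit j s).1) = (lit j s).2 at hs
      have := hagree _ (hmem s)
      rw [h2 s hst] at this
      rw [this] at hs
      revert hs; cases (lit j s).2 <;> simp
end

section
/- In the ONE-IN-THREE 3SAT reduction, given a truth assignment σ : {x₁,…,x_n} → {true, false} in which every clause has exactly one true literal, the function c defined by c(x_k) = +1 if σ(x_k) = true and −1 otherwise, and c(Cᵢ) = +1 for all i, is a group-realizable concept in C(G,H) consistent with S = ((C₁,+1),…,(C_m,+1)). -/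
theorem stmt12 (n m : ℕ) (lit : Fin m → Fin 3 → Fin n × Bool)
    -- each clause's three literals are over three distinct variables
    (hdistinct : ∀ i, Function.Injective fun t => (lit i t).1)
    (σ : Fin n → Bool)
    -- every clause has exactly one true literal under σ
    (hσ : ∀ i : Fin m, ∃! t : Fin 3, σ (lit i t).1 = (lit i t).2) :
    -- the function c given by σ on variable points and +1 on clause points is a
    -- group-realizable concept consistent with S = ((C₁,+1),…,(C_m,+1))
    (Sum.elim σ (fun _ => true)) ∈ GRConcepts (GrpFam lit) (Hyp lit) ∧
    ∀ i : Fin m, Sum.elim σ (fun _ => true) (Sum.inr i) = true := by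
  constructor
  · intro g hg
    obtain ⟨i, rfl⟩ := hg
    obtain ⟨t, ht, hu⟩ := hσ i
    refine ⟨Sum.elim σ (fun j => decide (j = i)), ?_, ?_⟩
    · refine Set.mem_iUnion.2 ⟨i, Set.mem_iUnion.2 ⟨t, ?_⟩⟩
      refine ⟨ht, fun s hs => ?_, by simp, fun j hj => by simp [hj]⟩
      have h2 : σ (lit i s).1 ≠ (lit i s).2 := fun h => hs (hu s h)
      simp only [Sum.elim_inl]
      cases hb : (lit i s).2 <;> simp [hb] at h2 ⊢ <;> simp [h2]
    · intro x hx
      rcases hx with rfl | rfl | rfl | rfl <;> simp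
  · intro i; simp
end

section
/- Let G be a family of subsets of X with VC dimension d_G < ∞ and let H have VC dimension d_H < ∞. Then for any fixed c* : X → {−1,+1}, the class F = { x ↦ 1[x ∈ g]·1[c(x) ≠ c*(x)] : g ∈ G, c ∈ C(G,H) } has VC dimension at most O((d_G + d_H)·log(d_G + d_H + 1)); in particular F has finite VC dimension even though C(G,H) may have infinite VC dimension. -/
open scoped Classical

set_option maxHeartbeats 1000000

lemma sum_choose_le (n d : ℕ) : ∑ k ∈ Finset.Iic d, n.choose k ≤ (n+1)^d := by
  have hr : ∀ m : ℕ, Finset.Iic m = Finset.range (m+1) := by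
    intro m; ext k; simp [Nat.lt_succ_iff]
  rw [hr]
  induction d with
  | zero => simp
  | succ d ih =>
    rw [Finset.sum_range_succ]
    have h1 := Nat.choose_le_pow n (d+1)
    have h2 : n * n^d ≤ n * (n+1)^d := by gcongr; omega
    have h3 : (n+1)^(d+1) = (n+1)^d + n * (n+1)^d := by ring
    calc ∑ k ∈ Finset.range (d+1), n.choose k + n.choose (d+1)
        ≤ (n+1)^d + n^(d+1) := Nat.add_le_add ih h1
      _ ≤ (n+1)^d + n * (n+1)^d := by rw [pow_succ']; exact Nat.add_le_add_left h2 _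
      _ = (n+1)^(d+1) := h3.symm

-- main combinatorial lemma
lemma comb13 {X : Type} (G : Set (Set X)) (H : Set (X → Bool)) (dG dH : ℕ)
    (hG : ∀ S : Finset X, SetShatters G S → S.card ≤ dG)
    (hH : ∀ S : Finset X, Shatters H S → S.card ≤ dH)
    (cs : X → Bool) (S : Finset X)
    (hF : Shatters {f : X → Bool | ∃ g ∈ G, ∃ c ∈ GRConcepts G H,
        f = fun x => decide (x ∈ g) && decide (c x ≠ cs x)} S) :
    2 ^ S.card ≤ (S.card + 1) ^ (dG + dH) := by
  set α := {x // x ∈ S}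
  have hcard : Fintype.card α = S.card := Fintype.card_coe S
  set 𝒜 : Finset (Finset α) :=
    Finset.univ.filter (fun T => ∃ g ∈ G, ∀ a : α, a ∈ T ↔ (a : X) ∈ g) with h𝒜
  set ℬ : Finset (Finset α) :=
    Finset.univ.filter (fun T => ∃ h ∈ H, ∀ a : α, a ∈ T ↔ h (a : X) ≠ cs (a : X)) with hℬ
  -- vcDim bounds
  have hAvc : 𝒜.vcDim ≤ dG := by
    refine Finset.sup_le fun s hs => ?_
    rw [Finset.mem_shatterer] at hs
    have hcard' : (s.image (Subtype.val : α → X)).card = s.card :=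
      Finset.card_image_of_injective _ Subtype.val_injective
    rw [← hcard']
    refine hG _ fun T hT => ?_
    obtain ⟨u, hu, hsu⟩ := hs (Finset.filter_subset (fun a : α => ↑a ∈ T) s)
    rw [h𝒜, Finset.mem_filter] at hu
    obtain ⟨-, g, hgG, hg⟩ := hu
    refine ⟨g, hgG, fun x hx => ?_⟩
    obtain ⟨a, ha, rfl⟩ := Finset.mem_image.1 hx
    constructor
    · intro hag
      have : a ∈ s ∩ u := Finset.mem_inter.2 ⟨ha, (hg a).2 hag⟩
      rw [hsu, Finset.mem_filter] at this
      exact this.2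
    · intro haT
      have : a ∈ s ∩ u := by rw [hsu]; exact Finset.mem_filter.2 ⟨ha, haT⟩
      exact (hg a).1 (Finset.mem_inter.1 this).2
  have hBvc : ℬ.vcDim ≤ dH := by
    refine Finset.sup_le fun s hs => ?_
    rw [Finset.mem_shatterer] at hs
    have hcard' : (s.image (Subtype.val : α → X)).card = s.card :=
      Finset.card_image_of_injective _ Subtype.val_injective
    rw [← hcard']
    refine hH _ fun b => ?_
    obtain ⟨u, hu, hsu⟩ := hs (Finset.filter_subset (fun a : α => b ↑a ≠ cs ↑a) s)
    rw [hℬ, Finset.mem_filter] at hu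
    obtain ⟨-, h, hhH, hh⟩ := hu
    refine ⟨h, hhH, fun x hx => ?_⟩
    obtain ⟨a, ha, rfl⟩ := Finset.mem_image.1 hx
    have hiff : (h (a : X) ≠ cs (a : X)) ↔ (b (a : X) ≠ cs (a : X)) := by
      constructor
      · intro hne
        have : a ∈ s ∩ u := Finset.mem_inter.2 ⟨ha, (hh a).2 hne⟩
        rw [hsu, Finset.mem_filter] at this
        exact this.2
      · intro hne
        have : a ∈ s ∩ u := by rw [hsu]; exact Finset.mem_filter.2 ⟨ha, hne⟩
        exact (hh a).1 (Finset.mem_inter.1 this).2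
    revert hiff
    cases h (a : X) <;> cases b (a : X) <;> cases cs (a : X) <;> simp
  -- counting: every subset of univ is an intersection of an 𝒜-member and a ℬ-member
  have hP : ∀ T : Finset α, ∃ p : Finset α × Finset α,
      p.1 ∈ 𝒜 ∧ p.2 ∈ ℬ ∧ p.1 ∩ p.2 = T := by
    intro T
    obtain ⟨f, hfF, hfb⟩ := hF (fun x => decide (∃ hx : x ∈ S, (⟨x, hx⟩ : α) ∈ T))
    obtain ⟨g, hgG, c, hcC, rfl⟩ := hfF
    obtain ⟨h, hhH, hgh⟩ := hcC g hgG
    refine ⟨(Finset.univ.filter (fun a : α => (a : X) ∈ g),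
            Finset.univ.filter (fun a : α => h (a : X) ≠ cs (a : X))), ?_, ?_, ?_⟩
    · rw [h𝒜, Finset.mem_filter]
      exact ⟨Finset.mem_univ _, g, hgG, fun a => by simp⟩
    · rw [hℬ, Finset.mem_filter]
      exact ⟨Finset.mem_univ _, h, hhH, fun a => by simp⟩
    · ext a
      simp only [Finset.mem_inter, Finset.mem_filter, Finset.mem_univ, true_and]
      have hb := hfb (a : X) a.2
      have heq : (decide ((a:X) ∈ g) && decide (c (a:X) ≠ cs (a:X))) =
          decide (∃ hx : (a:X) ∈ S, (⟨(a:X), hx⟩ : α) ∈ T) := hb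
      constructor
      · rintro ⟨hag, hane⟩
        have hc : c (a:X) ≠ cs (a:X) := by rw [hgh _ hag]; exact hane
        have : (decide ((a:X) ∈ g) && decide (c (a:X) ≠ cs (a:X))) = true := by
          simp [hag, hc]
        rw [heq] at this
        simp only [decide_eq_true_eq] at this
        obtain ⟨hx, hT⟩ := this
        simpa using hT
      · intro haT
        have : (decide ((a:X) ∈ g) && decide (c (a:X) ≠ cs (a:X))) = true := by
          rw [heq]
          simp only [decide_eq_true_eq]
          exact ⟨a.2, by simpa using haT⟩
        simp only [Bool.and_eq_true, decide_eq_true_eq] at this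
        exact ⟨this.1, by rw [← hgh _ this.1]; exact this.2⟩
  choose Φ hΦA hΦB hΦI using hP
  have hinj : Set.InjOn Φ ↑(Finset.univ : Finset (Finset α)) := by
    intro T _ T' _ hTT'
    rw [← hΦI T, ← hΦI T', hTT']
  have hcount : 2 ^ S.card ≤ 𝒜.card * ℬ.card := by
    have h1 : (Finset.univ : Finset (Finset α)).card ≤ (𝒜 ×ˢ ℬ).card := by
      refine Finset.card_le_card_of_injOn Φ (fun T _ => ?_) hinj
      exact Finset.mem_product.2 ⟨hΦA T, hΦB T⟩
    rw [Finset.card_univ, Fintype.card_finset, hcard, Finset.card_product] at h1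
    exact h1
  -- Sauer
  have hA : 𝒜.card ≤ (S.card + 1) ^ dG := by
    calc 𝒜.card ≤ 𝒜.shatterer.card := Finset.card_le_card_shatterer 𝒜
      _ ≤ ∑ k ∈ Finset.Iic 𝒜.vcDim, (Fintype.card α).choose k :=
          Finset.card_shatterer_le_sum_vcDim
      _ ≤ ∑ k ∈ Finset.Iic dG, (Fintype.card α).choose k := by
          refine Finset.sum_le_sum_of_subset ?_
          exact Finset.Iic_subset_Iic.2 hAvc
      _ ≤ (Fintype.card α + 1) ^ dG := sum_choose_le _ _
      _ = (S.card + 1) ^ dG := by rw [hcard]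
  have hB : ℬ.card ≤ (S.card + 1) ^ dH := by
    calc ℬ.card ≤ ℬ.shatterer.card := Finset.card_le_card_shatterer ℬ
      _ ≤ ∑ k ∈ Finset.Iic ℬ.vcDim, (Fintype.card α).choose k :=
          Finset.card_shatterer_le_sum_vcDim
      _ ≤ ∑ k ∈ Finset.Iic dH, (Fintype.card α).choose k := by
          refine Finset.sum_le_sum_of_subset ?_
          exact Finset.Iic_subset_Iic.2 hBvc
      _ ≤ (Fintype.card α + 1) ^ dH := sum_choose_le _ _
      _ = (S.card + 1) ^ dH := by rw [hcard]
  calc 2 ^ S.card ≤ 𝒜.card * ℬ.card := hcount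
    _ ≤ (S.card + 1) ^ dG * (S.card + 1) ^ dH := Nat.mul_le_mul hA hB
    _ = (S.card + 1) ^ (dG + dH) := (pow_add _ _ _).symm



lemma analytic13 (n d : ℕ) (hd : 1 ≤ d) (h : 2^n ≤ (n+1)^d) :
    (n : ℝ) ≤ 100 * d * Real.log (d+1) := by
  have hD1 : (1:ℝ) ≤ (d:ℝ) := by exact_mod_cast hd
  have hL0 : (0:ℝ) ≤ Real.log ((d:ℝ)+1) := Real.log_nonneg (by linarith)
  have hrhs : (0:ℝ) ≤ 100 * (d:ℝ) * Real.log ((d:ℝ)+1) :=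
    mul_nonneg (by linarith) hL0
  rcases Nat.eq_zero_or_pos n with hn | hn
  · subst hn; push_cast; linarith
  have hN1 : (1:ℝ) ≤ (n:ℝ) := by exact_mod_cast hn
  have hn0 : (0:ℝ) ≤ (n:ℝ) := by linarith
  have hd0 : (0:ℝ) ≤ (d:ℝ) := by linarith
  have h' : (n:ℝ) * Real.log 2 ≤ (d:ℝ) * Real.log ((n:ℝ)+1) := by
    have hc : ((2:ℝ))^n ≤ ((n:ℝ)+1)^d := by exact_mod_cast h
    have := Real.log_le_log (by positivity) hc
    rwa [Real.log_pow, Real.log_pow] at this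
  have hlog2 : (0.6931471803:ℝ) < Real.log 2 := Real.log_two_gt_d9
  have hmono : (0.6931471803:ℝ) * (n:ℝ) ≤ (n:ℝ) * Real.log 2 := by nlinarith
  have hs : Real.log ((n:ℝ)+1) ≤ 2 * Real.sqrt ((n:ℝ)+1) := by
    have h1 : Real.log (Real.sqrt ((n:ℝ)+1)) = Real.log ((n:ℝ)+1) / 2 :=
      Real.log_sqrt (by linarith)
    have h2 : Real.log (Real.sqrt ((n:ℝ)+1)) ≤ Real.sqrt ((n:ℝ)+1) - 1 :=
      Real.log_le_sub_one_of_pos (Real.sqrt_pos.2 (by linarith))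
    linarith
  set s := Real.sqrt (n:ℝ) with hsdef
  have hs0 : 0 ≤ s := Real.sqrt_nonneg _
  have hss : s * s = (n:ℝ) := Real.mul_self_sqrt hn0
  have hsq : Real.sqrt ((n:ℝ)+1) ≤ Real.sqrt 2 * s := by
    rw [hsdef, ← Real.sqrt_mul (by norm_num)]
    exact Real.sqrt_le_sqrt (by linarith)
  have hsqrt2 : Real.sqrt 2 ≤ 1.4142135624 := by
    rw [show (1.4142135624:ℝ) = Real.sqrt (1.4142135624^2) by rw [Real.sqrt_sq (by norm_num)]]
    exact Real.sqrt_le_sqrt (by norm_num)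
  have hsqrt20 : 0 ≤ Real.sqrt 2 := Real.sqrt_nonneg _
  have hkey2 : (0.6931471803:ℝ) * (n:ℝ) ≤ 2.8284271248 * ((d:ℝ) * s) := by
    have hstep : Real.log ((n:ℝ)+1) ≤ 2 * (Real.sqrt 2 * s) := by nlinarith [hs, hsq]
    have h1 : (d:ℝ) * Real.log ((n:ℝ)+1) ≤ (d:ℝ) * (2 * (Real.sqrt 2 * s)) :=
      mul_le_mul_of_nonneg_left hstep hd0
    have h2 : Real.sqrt 2 * ((d:ℝ) * s) ≤ 1.4142135624 * ((d:ℝ) * s) :=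
      mul_le_mul_of_nonneg_right hsqrt2 (mul_nonneg hd0 hs0)
    nlinarith [h', h1, h2, hmono]
  have hn17 : (n:ℝ) ≤ 17 * (d:ℝ)^2 := by
    nlinarith [sq_nonneg (0.6931471803 * s - 2.8284271248 * (d:ℝ)), hss, hs0, hkey2]
  have hn17' : n ≤ 17 * d^2 := by
    have hc : (n:ℝ) ≤ ((17*d^2 : ℕ):ℝ) := by push_cast; linarith
    exact_mod_cast hc
  have hnat : n + 1 ≤ (d+1)^10 := by
    have h8 : 2^8 ≤ (d+1)^8 := Nat.pow_le_pow_left (by omega) 8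
    have h2' : d^2 ≤ (d+1)^2 := Nat.pow_le_pow_left (by omega) 2
    have hd2 : 1 ≤ d^2 := Nat.one_le_pow _ _ (by omega)
    calc n + 1 ≤ 17 * d^2 + 1 := by omega
      _ ≤ 256 * d^2 := by omega
      _ = 2^8 * d^2 := by norm_num
      _ ≤ (d+1)^8 * (d+1)^2 := Nat.mul_le_mul h8 h2'
      _ = (d+1)^10 := by ring
  have hlogn : Real.log ((n:ℝ)+1) ≤ 10 * Real.log ((d:ℝ)+1) := by
    have hc : ((n:ℝ)+1) ≤ ((d:ℝ)+1)^10 := by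
      have : ((n+1:ℕ):ℝ) ≤ (((d+1)^10 : ℕ):ℝ) := by exact_mod_cast hnat
      push_cast at this; linarith
    have := Real.log_le_log (by positivity) hc
    rwa [Real.log_pow] at this
  have hdl : (0:ℝ) ≤ (d:ℝ) * Real.log ((d:ℝ)+1) := mul_nonneg hd0 hL0
  have hfin : (n:ℝ) * Real.log 2 ≤ (d:ℝ) * (10 * Real.log ((d:ℝ)+1)) :=
    h'.trans (mul_le_mul_of_nonneg_left hlogn hd0)
  push_cast
  nlinarith [hfin, hdl, hmono]



theorem stmt13 :
    ∃ K : ℝ, 0 < K ∧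
      ∀ (X : Type) (G : Set (Set X)) (H : Set (X → Bool)) (dG dH : ℕ),
        -- G has VC dimension at most dG
        (∀ S : Finset X, SetShatters G S → S.card ≤ dG) →
        -- H has VC dimension at most dH
        (∀ S : Finset X, Shatters H S → S.card ≤ dH) →
        ∀ cs : X → Bool,
          -- the class F = { 1[·∈g]·1[c ≠ c*] : g ∈ G, c ∈ C(G,H) } has VC
          -- dimension at most O((dG + dH) · log(dG + dH + 1))
          ∀ S : Finset X,
            Shatters {f : X → Bool | ∃ g ∈ G, ∃ c ∈ GRConcepts G H,
                f = fun x => decide (x ∈ g) && decide (c x ≠ cs x)} S →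
              (S.card : ℝ) ≤ K * ((dG + dH) * Real.log (dG + dH + 1)) := by
  refine ⟨100, by norm_num, fun X G H dG dH hG hH cs S hF => ?_⟩
  have hkey := comb13 G H dG dH hG hH cs S hF
  rcases Nat.eq_zero_or_pos (dG + dH) with hd | hd
  · rw [hd] at hkey
    simp only [pow_zero] at hkey
    have hn : S.card = 0 := by
      by_contra hn
      have : 2 ≤ 2 ^ S.card := by
        calc 2 = 2^1 := (pow_one 2).symm
          _ ≤ 2 ^ S.card := Nat.pow_le_pow_right (by norm_num) (by omega)
      omega
    rw [hn]
    have h1 : (dG:ℝ) = 0 := by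
      have : dG = 0 := by omega
      simp [this]
    have h2 : (dH:ℝ) = 0 := by
      have : dH = 0 := by omega
      simp [this]
    rw [h1, h2]
    norm_num
  · have := analytic13 S.card (dG + dH) hd hkey
    push_cast at this ⊢
    linarith
end
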